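/- Let n ≥ 1 be an integer, s > 0 real, and C > 0 real with C > n/s. Then there exists a sequence (u_k)_{k≥0} of nonnegative reals with Σ u_k²/(k+1) < ∞ such that Σ_{k=0}^{n−1} u_k²/(k+n+1) + Σ_{k=n}^∞ n² u_k²/((k+1)²(k+n+1)) < 4snC Σ_{k=0}^∞ u_k u_{k+n}/((k+n+1)(2k+2n+s+2)(2k+s+2)). -/

import Mathlib

open Finset Filter

set_option maxHeartbeats 1000000 in
/-- For `n ≥ 1` and positive reals `s, C` with `C > n/s`, there is a nonnegative
sequence `u` with `Σ u_k²/(k+1) < ∞` violating the hyponormality inequality. -/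
theorem stmt9 (n : ℕ) (hn : 1 ≤ n) (s C : ℝ) (hs : 0 < s) (hC0 : 0 < C)
    (hC : n / s < C) :
    ∃ u : ℕ → ℝ, (∀ k, 0 ≤ u k) ∧
      Summable (fun k : ℕ => u k ^ 2 / ((k : ℝ) + 1)) ∧
      (∑ k ∈ range n, u k ^ 2 / ((k : ℝ) + n + 1))
        + (∑' k : ℕ, (n : ℝ) ^ 2 * u (k + n) ^ 2 /
            (((k : ℝ) + n + 1) ^ 2 * ((k : ℝ) + n + n + 1)))
      < 4 * s * n * C * ∑' k : ℕ, u k * u (k + n) /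
          (((k : ℝ) + n + 1) * (2 * k + 2 * n + s + 2) * (2 * k + s + 2)) := by
  classical
  have hn1 : (1:ℝ) ≤ (n:ℝ) := by exact_mod_cast hn
  have hnpos : (0:ℝ) < (n:ℝ) := by linarith
  have hsC : (n:ℝ) < s * C := by
    have h := (div_lt_iff₀ hs).1 hC; linarith
  set c : ℝ := (s*C/(n:ℝ) - 1)/2 with hc_def
  have hc : 0 < c := by
    have h1 : 1 < s*C/(n:ℝ) := (one_lt_div hnpos).2 hsC
    rw [hc_def]; linarith
  have hsCn : s*C = (n:ℝ)*(1+2*c) := by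
    rw [hc_def]; field_simp; ring
  set δ : ℝ := c/(4*(1+c)) with hδ_def
  have h1c : (0:ℝ) < 1 + c := by linarith
  have hδ : 0 < δ := by rw [hδ_def]; positivity
  have hδc : δ * (4*(1+c)) = c := by rw [hδ_def]; field_simp
  have hδ1 : δ ≤ 1 := by
    rw [hδ_def, div_le_one (by positivity)]; linarith
  have hE : (1+c)*(1+δ)^2 ≤ 1+2*c := by nlinarith [hδc, hδ, hδ1, hc]
  obtain ⟨t₀, ht₀⟩ := exists_nat_ge ((2*(n:ℝ)+s)/(2*δ))
  set t := max t₀ n with ht_def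
  have htn : n ≤ t := le_max_right _ _
  have htK : (2*(n:ℝ)+s)/(2*δ) ≤ (t:ℝ) :=
    ht₀.trans (by exact_mod_cast le_max_left t₀ n)
  -- the per-term comparison
  have key : ∀ k : ℕ, t ≤ k →
      (1+c) * (n:ℝ)^2 / ((k:ℝ)+n+n+1)
        ≤ 4*s*n*C * (((k:ℝ)+1)/((2*(k:ℝ)+2*n+s+2)*(2*(k:ℝ)+s+2))) := by
    intro k hk
    have hKt : (t:ℝ) ≤ (k:ℝ) := Nat.cast_le.2 hk
    have hK0 : (0:ℝ) ≤ (k:ℝ) := Nat.cast_nonneg k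
    have h2 : 2*(n:ℝ)+s ≤ 2*δ*((k:ℝ)) := by
      rw [div_le_iff₀ (by positivity)] at htK; nlinarith
    have hb1 : 2*(k:ℝ)+2*n+s+2 ≤ 2*(1+δ)*((k:ℝ)+1) := by nlinarith
    have hb2 : 2*(k:ℝ)+s+2 ≤ 2*(1+δ)*((k:ℝ)+1) := by nlinarith
    have hd1 : (0:ℝ) < (k:ℝ)+n+n+1 := by linarith
    have hd2 : (0:ℝ) < 2*(k:ℝ)+2*n+s+2 := by linarith
    have hd3 : (0:ℝ) < 2*(k:ℝ)+s+2 := by linarith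
    rw [mul_div_assoc', div_le_div_iff₀ hd1 (by positivity)]
    have Hp : (2*(k:ℝ)+2*n+s+2)*(2*(k:ℝ)+s+2) ≤ 4*(1+δ)^2*((k:ℝ)+1)^2 := by
      calc (2*(k:ℝ)+2*n+s+2)*(2*(k:ℝ)+s+2)
          ≤ (2*(1+δ)*((k:ℝ)+1))*(2*(1+δ)*((k:ℝ)+1)) :=
            mul_le_mul hb1 hb2 hd3.le (by positivity)
        _ = 4*(1+δ)^2*((k:ℝ)+1)^2 := by ring
    have H1 : (1+c)*(n:ℝ)^2*((2*(k:ℝ)+2*n+s+2)*(2*(k:ℝ)+s+2))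
        ≤ (1+c)*(1+δ)^2*(4*(n:ℝ)^2*((k:ℝ)+1)^2) := by
      calc (1+c)*(n:ℝ)^2*((2*(k:ℝ)+2*n+s+2)*(2*(k:ℝ)+s+2))
          ≤ (1+c)*(n:ℝ)^2*(4*(1+δ)^2*((k:ℝ)+1)^2) :=
            mul_le_mul_of_nonneg_left Hp (by positivity)
        _ = (1+c)*(1+δ)^2*(4*(n:ℝ)^2*((k:ℝ)+1)^2) := by ring
    have H2 : (1+c)*(1+δ)^2*(4*(n:ℝ)^2*((k:ℝ)+1)^2)
        ≤ (1+2*c)*(4*(n:ℝ)^2*((k:ℝ)+1)^2) :=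
      mul_le_mul_of_nonneg_right hE (by positivity)
    have h4 : 4*s*(n:ℝ)*C = 4*(1+2*c)*(n:ℝ)^2 := by
      linear_combination (4*(n:ℝ))*hsCn
    have H3 : (1+2*c)*(4*(n:ℝ)^2*((k:ℝ)+1)^2)
        ≤ 4*s*n*C*((k:ℝ)+1)*((k:ℝ)+n+n+1) := by
      rw [h4]
      have hk2 : ((k:ℝ)+1)*((k:ℝ)+1) ≤ ((k:ℝ)+1)*((k:ℝ)+n+n+1) :=
        mul_le_mul_of_nonneg_left (by linarith) (by positivity)
      calc (1+2*c)*(4*(n:ℝ)^2*((k:ℝ)+1)^2)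
          = (4*(1+2*c)*(n:ℝ)^2)*(((k:ℝ)+1)*((k:ℝ)+1)) := by ring
        _ ≤ (4*(1+2*c)*(n:ℝ)^2)*(((k:ℝ)+1)*((k:ℝ)+n+n+1)) :=
            mul_le_mul_of_nonneg_left hk2 (by positivity)
        _ = 4*(1+2*c)*(n:ℝ)^2*((k:ℝ)+1)*((k:ℝ)+n+n+1) := by ring
    linarith [H1, H2, H3]
  -- choose the length of the block
  have hH := Real.tendsto_sum_range_one_div_nat_succ_atTop
  obtain ⟨m, hm1, hm2⟩ :=
    ((hH.eventually_ge_atTop ((∑ i ∈ range t, (1/((i:ℝ)+1)))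
        + ((n:ℝ)*(2*n+1)/c + 1))).and (eventually_ge_atTop t)).exists
  set u : ℕ → ℝ := fun k => if t ≤ k ∧ k < m + n then (k:ℝ)+1 else 0 with hu_def
  have hu_in : ∀ k, t ≤ k → k < m + n → u k = (k:ℝ)+1 := by
    intro k h1 h2; rw [hu_def]; exact if_pos ⟨h1, h2⟩
  have hu_out : ∀ k, ¬ (t ≤ k ∧ k < m+n) → u k = 0 := by
    intro k h; rw [hu_def]; exact if_neg h
  have hupos : ∀ k, 0 ≤ u k := by
    intro k; rw [hu_def]; dsimp only; split_ifs with h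
    · positivity
    · exact le_rfl
  refine ⟨u, hupos, ?_, ?_⟩
  · apply summable_of_ne_finset_zero (s := Finset.range (m+n))
    intro k hk
    have hk' : ¬ (t ≤ k ∧ k < m+n) := by
      rw [mem_range, not_lt] at hk; omega
    simp [hu_def, hk']
  · -- main inequality
    have hmt : t ≤ m := hm2
    have hm1' : (∑ i ∈ range t, (1/((i:ℝ)+1)))
        + ((n:ℝ)*(2*(n:ℝ)+1)/c + 1) ≤ ∑ i ∈ range m, (1/((i:ℝ)+1)) := hm1
    have hhead : ∑ k ∈ range n, u k ^ 2 / ((k:ℝ)+n+1) = 0 := by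
      apply Finset.sum_eq_zero
      intro k hk
      rw [mem_range] at hk
      have hnc : ¬ (t ≤ k ∧ k < m+n) := by omega
      have hz : u k = 0 := hu_out _ hnc
      rw [hz]; simp
    have hA : (∑' k : ℕ, (n:ℝ)^2 * u (k+n)^2 / (((k:ℝ)+n+1)^2 * ((k:ℝ)+n+n+1)))
        = ∑ k ∈ range m, (n:ℝ)^2 * u (k+n)^2 / (((k:ℝ)+n+1)^2 * ((k:ℝ)+n+n+1)) := by
      apply tsum_eq_sum
      intro k hk
      rw [mem_range, not_lt] at hk
      have hnc : ¬ (t ≤ k+n ∧ k+n < m+n) := by omega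
      have hz : u (k+n) = 0 := hu_out _ hnc
      rw [hz]; simp
    have hB : (∑' k : ℕ, u k * u (k+n) /
          (((k:ℝ)+n+1) * (2*(k:ℝ)+2*(n:ℝ)+s+2) * (2*(k:ℝ)+s+2)))
        = ∑ k ∈ range m, u k * u (k+n) /
          (((k:ℝ)+n+1) * (2*(k:ℝ)+2*(n:ℝ)+s+2) * (2*(k:ℝ)+s+2)) := by
      apply tsum_eq_sum
      intro k hk
      rw [mem_range, not_lt] at hk
      have hnc : ¬ (t ≤ k+n ∧ k+n < m+n) := by omega
      have hz : u (k+n) = 0 := hu_out _ hnc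
      rw [hz]; simp
    rw [hhead, zero_add, hA, hB]
    set p := t - n with hp_def
    have hAbound : ∑ k ∈ range m, (n:ℝ)^2 * u (k+n)^2 / (((k:ℝ)+n+1)^2 * ((k:ℝ)+n+n+1))
        ≤ (n:ℝ)^3 + ∑ k ∈ Ico t m, (n:ℝ)^2 / ((k:ℝ)+n+n+1) := by
      rw [range_eq_Ico, ← Finset.sum_Ico_consecutive _ (Nat.zero_le t) hmt]
      have part2 : ∑ k ∈ Ico t m, (n:ℝ)^2 * u (k+n)^2 / (((k:ℝ)+n+1)^2 * ((k:ℝ)+n+n+1))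
          = ∑ k ∈ Ico t m, (n:ℝ)^2 / ((k:ℝ)+n+n+1) := by
        apply Finset.sum_congr rfl
        intro k hk
        rw [mem_Ico] at hk
        have hcond : t ≤ k+n ∧ k+n < m+n := by omega
        have h1 : u (k+n) = (k:ℝ)+n+1 := by
          rw [hu_in (k+n) hcond.1 hcond.2]; push_cast; ring
        rw [h1]
        have hkc : (0:ℝ) ≤ (k:ℝ) := Nat.cast_nonneg k
        have hne : ((k:ℝ)+n+1) ≠ 0 := by positivity
        have hne2 : ((k:ℝ)+n+n+1) ≠ 0 := by positivity
        field_simp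
      have part1 : ∑ k ∈ Ico 0 t, (n:ℝ)^2 * u (k+n)^2 / (((k:ℝ)+n+1)^2 * ((k:ℝ)+n+n+1))
          ≤ (n:ℝ)^3 := by
        rw [← Finset.sum_Ico_consecutive _ (Nat.zero_le p) (by omega : p ≤ t)]
        have z1 : ∑ k ∈ Ico 0 p, (n:ℝ)^2 * u (k+n)^2 / (((k:ℝ)+n+1)^2 * ((k:ℝ)+n+n+1)) = 0 := by
          apply Finset.sum_eq_zero
          intro k hk
          rw [mem_Ico] at hk
          have hnc : ¬ (t ≤ k+n ∧ k+n < m+n) := by omega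
          have hz : u (k+n) = 0 := hu_out _ hnc
          rw [hz]; simp
        rw [z1, zero_add]
        have bnd : ∀ k ∈ Ico p t,
            (n:ℝ)^2 * u (k+n)^2 / (((k:ℝ)+n+1)^2 * ((k:ℝ)+n+n+1)) ≤ (n:ℝ)^2 := by
          intro k hk
          have hkc : (0:ℝ) ≤ (k:ℝ) := Nat.cast_nonneg k
          have husq : u (k+n)^2 ≤ ((k:ℝ)+n+1)^2 := by
            by_cases h : t ≤ k+n ∧ k+n < m+n
            · rw [hu_in (k+n) h.1 h.2]; apply le_of_eq; push_cast; ring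
            · rw [hu_out _ h]; simpa using sq_nonneg ((k:ℝ)+n+1)
          have step1 : (n:ℝ)^2 * u (k+n)^2 / (((k:ℝ)+n+1)^2 * ((k:ℝ)+n+n+1))
              ≤ (n:ℝ)^2 * ((k:ℝ)+n+1)^2 / (((k:ℝ)+n+1)^2 * ((k:ℝ)+n+n+1)) := by
            gcongr
          have step2 : (n:ℝ)^2 * ((k:ℝ)+n+1)^2 / (((k:ℝ)+n+1)^2 * ((k:ℝ)+n+n+1))
              = (n:ℝ)^2 / ((k:ℝ)+n+n+1) := by
            have hne : ((k:ℝ)+n+1) ≠ 0 := by positivity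
            have hne2 : ((k:ℝ)+n+n+1) ≠ 0 := by positivity
            field_simp
          have step3 : (n:ℝ)^2 / ((k:ℝ)+n+n+1) ≤ (n:ℝ)^2 :=
            div_le_self (by positivity) (by linarith)
          linarith [step1, step2.le, step2.ge]
        calc ∑ k ∈ Ico p t, (n:ℝ)^2 * u (k+n)^2 / (((k:ℝ)+n+1)^2 * ((k:ℝ)+n+n+1))
            ≤ ∑ _k ∈ Ico p t, (n:ℝ)^2 := Finset.sum_le_sum bnd
          _ = ((t - p : ℕ):ℝ) * (n:ℝ)^2 := by
              rw [Finset.sum_const, Nat.card_Ico, nsmul_eq_mul]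
          _ = (n:ℝ)^3 := by
              have : t - p = n := by omega
              rw [this]; ring
      rw [part2]
      exact add_le_add_left part1 _
    have hBeq : ∑ k ∈ range m, u k * u (k+n) /
          (((k:ℝ)+n+1) * (2*(k:ℝ)+2*(n:ℝ)+s+2) * (2*(k:ℝ)+s+2))
        = ∑ k ∈ Ico t m, ((k:ℝ)+1)/((2*(k:ℝ)+2*(n:ℝ)+s+2)*(2*(k:ℝ)+s+2)) := by
      rw [range_eq_Ico, ← Finset.sum_Ico_consecutive _ (Nat.zero_le t) hmt]
      have z : ∑ k ∈ Ico 0 t, u k * u (k+n) /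
          (((k:ℝ)+n+1) * (2*(k:ℝ)+2*(n:ℝ)+s+2) * (2*(k:ℝ)+s+2)) = 0 := by
        apply Finset.sum_eq_zero
        intro k hk
        rw [mem_Ico] at hk
        have hnc : ¬ (t ≤ k ∧ k < m+n) := by omega
        have hz : u k = 0 := hu_out _ hnc
        rw [hz]; simp
      rw [z, zero_add]
      apply Finset.sum_congr rfl
      intro k hk
      rw [mem_Ico] at hk
      have hkc : (0:ℝ) ≤ (k:ℝ) := Nat.cast_nonneg k
      have h1 : u k = (k:ℝ)+1 := hu_in k hk.1 (by omega)
      have h2 : u (k+n) = (k:ℝ)+n+1 := by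
        rw [hu_in (k+n) (by omega) (by omega)]; push_cast; ring
      rw [h1, h2]
      have hne : ((k:ℝ)+n+1) ≠ 0 := by positivity
      have hd2 : (2*(k:ℝ)+2*(n:ℝ)+s+2) ≠ 0 := by nlinarith
      have hd3 : (2*(k:ℝ)+s+2) ≠ 0 := by nlinarith
      field_simp
    rw [hBeq]
    have hsum1 : ∑ k ∈ Ico t m, (1+c)*(n:ℝ)^2/((k:ℝ)+n+n+1)
        ≤ ∑ k ∈ Ico t m, 4*s*n*C*(((k:ℝ)+1)/((2*(k:ℝ)+2*(n:ℝ)+s+2)*(2*(k:ℝ)+s+2))) :=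
      Finset.sum_le_sum (fun k hk => key k (mem_Ico.1 hk).1)
    have hmulA : ∑ k ∈ Ico t m, (1+c)*(n:ℝ)^2/((k:ℝ)+n+n+1)
        = (∑ k ∈ Ico t m, (n:ℝ)^2/((k:ℝ)+n+n+1))
          + c*(n:ℝ)^2 * ∑ k ∈ Ico t m, 1/((k:ℝ)+n+n+1) := by
      rw [Finset.mul_sum, ← Finset.sum_add_distrib]
      apply Finset.sum_congr rfl
      intro k _
      ring
    have hmulB : ∑ k ∈ Ico t m, 4*s*n*C*(((k:ℝ)+1)/((2*(k:ℝ)+2*(n:ℝ)+s+2)*(2*(k:ℝ)+s+2)))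
        = 4*s*n*C * ∑ k ∈ Ico t m, ((k:ℝ)+1)/((2*(k:ℝ)+2*(n:ℝ)+s+2)*(2*(k:ℝ)+s+2)) :=
      (Finset.mul_sum _ _ _).symm
    have hharm : (n:ℝ)*(2*(n:ℝ)+1)/c + 1 ≤ ∑ k ∈ Ico t m, 1/((k:ℝ)+1) := by
      rw [Finset.sum_Ico_eq_sub _ hmt]
      linarith [hm1']
    have hS2 : ∑ k ∈ Ico t m, 1/((k:ℝ)+1)
        ≤ (2*(n:ℝ)+1) * ∑ k ∈ Ico t m, 1/((k:ℝ)+n+n+1) := by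
      rw [Finset.mul_sum]
      apply Finset.sum_le_sum
      intro k _
      have hkc : (0:ℝ) ≤ (k:ℝ) := Nat.cast_nonneg k
      have h1 : (0:ℝ) < (k:ℝ)+1 := by linarith
      have h2 : (0:ℝ) < (k:ℝ)+n+n+1 := by linarith
      rw [mul_one_div, div_le_div_iff₀ h1 h2]
      nlinarith [mul_nonneg (by linarith : (0:ℝ) ≤ 2*(n:ℝ)) hkc]
    have hfin : (n:ℝ)^3 < c*(n:ℝ)^2 * ∑ k ∈ Ico t m, 1/((k:ℝ)+n+n+1) := by
      have h2n1 : (0:ℝ) < 2*(n:ℝ)+1 := by linarith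
      have e3 : (0:ℝ) < c*(n:ℝ)^2/(2*(n:ℝ)+1) := by positivity
      have step := mul_le_mul_of_nonneg_left (le_trans hharm hS2) e3.le
      have e1 : c*(n:ℝ)^2/(2*(n:ℝ)+1) * ((2*(n:ℝ)+1) * ∑ k ∈ Ico t m, 1/((k:ℝ)+n+n+1))
          = c*(n:ℝ)^2 * ∑ k ∈ Ico t m, 1/((k:ℝ)+n+n+1) := by
        rw [← mul_assoc, div_mul_cancel₀ _ h2n1.ne']
      have e2 : c*(n:ℝ)^2/(2*(n:ℝ)+1) * ((n:ℝ)*(2*(n:ℝ)+1)/c + 1)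
          = (n:ℝ)^3 + c*(n:ℝ)^2/(2*(n:ℝ)+1) := by
        field_simp
      rw [e1, e2] at step
      linarith [step, e3]
    have hsum2 : (∑ k ∈ Ico t m, (n:ℝ)^2/((k:ℝ)+n+n+1))
          + c*(n:ℝ)^2 * (∑ k ∈ Ico t m, 1/((k:ℝ)+n+n+1))
        ≤ 4*s*n*C * ∑ k ∈ Ico t m, ((k:ℝ)+1)/((2*(k:ℝ)+2*(n:ℝ)+s+2)*(2*(k:ℝ)+s+2)) := by
      rw [← hmulA, ← hmulB]
      exact hsum1
    linarith [hAbound, hfin, hsum2]
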